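/- arXiv:1106.1312 — 3 statements merged into one kernel-verified Lean document; each statement's English description precedes it below -/
import Mathlib

section
/- Let k be a field, let A be an integral domain that is a finitely generated k-algebra, let f ∈ A be nonzero, and let B = A_f be the localization of A away from f, with canonical injection ι : A → B. Let δ : B → B be a locally nilpotent k-derivation such that δ(ι(f)) = 0. Then there exist N ∈ ℕ and a k-derivation D : A → A such that ι(D(a)) = ι(f)^N · δ(ι(a)) for all a ∈ A, and D is locally nilpotent. -/
/-- Let `k` be a field, `A` an integral domain which is a finitely generated `k`-algebra,
`f ∈ A` nonzero, and let `B` be the localization of `A` away from `f`, with canonical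
injection `ι = algebraMap A B`.  Let `δ : B → B` be a locally nilpotent `k`-derivation with
`δ (ι f) = 0`.  Then there exist `N : ℕ` and a `k`-derivation `D : A → A` such that
`ι (D a) = (ι f) ^ N * δ (ι a)` for all `a ∈ A`, and `D` is locally nilpotent. -/
theorem lnd_descends_to_affine_cone {k A B : Type*} [Field k]
    [CommRing A] [IsDomain A] [Algebra k A] [Algebra.FiniteType k A]
    [CommRing B] [Algebra k B] [Algebra A B] [IsScalarTower k A B]
    (f : A) (hf : f ≠ 0) [IsLocalization.Away f B]
    (δ : Derivation k B B)
    (hδf : δ (algebraMap A B f) = 0)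
    (hln : ∀ b : B, ∃ n : ℕ, (⇑δ)^[n] b = 0) :
    ∃ (N : ℕ) (D : Derivation k A A),
      (∀ a : A, algebraMap A B (D a) = (algebraMap A B f) ^ N * δ (algebraMap A B a)) ∧
      (∀ a : A, ∃ n : ℕ, (⇑D)^[n] a = 0) := by
  classical
  have hι : Function.Injective (algebraMap A B) :=
    IsLocalization.injective B (powers_le_nonZeroDivisors_of_noZeroDivisors hf)
  set ι : A →+* B := algebraMap A B with hιdef
  -- clearing denominators
  have hclear : ∀ b : B, ∃ (j : ℕ) (c : A), ι f ^ j * b = ι c := by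
    intro b
    obtain ⟨⟨c, m⟩, hm⟩ := IsLocalization.surj (M := Submonoid.powers f) b
    obtain ⟨j, hj⟩ := m.2
    have hj' : f ^ j = (m : A) := hj
    refine ⟨j, c, ?_⟩
    rw [← map_pow, hj', mul_comm]
    exact hm
  obtain ⟨s, hs⟩ : (⊤ : Subalgebra k A).FG := Algebra.FiniteType.out
  let j : A → ℕ := fun a => (hclear (δ (ι a))).choose
  have hj : ∀ a, ∃ c, ι f ^ j a * δ (ι a) = ι c :=
    fun a => (hclear (δ (ι a))).choose_spec
  set N := s.sup j with hN
  -- δ kills powers of ι f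
  have hpow : ∀ (m : ℕ) (b : B), δ (ι f ^ m * b) = ι f ^ m * δ b := by
    intro m b
    have hz : δ (ι f ^ m) = 0 := by
      rw [Derivation.leibniz_pow, hδf]
      simp
    rw [Derivation.leibniz, hz]
    simp [smul_eq_mul]
  -- smul compatibility
  have hsmul : ∀ (r : k) (a : A), ι (r • a) = r • ι a := by
    intro r a
    rw [Algebra.smul_def, map_mul, hιdef, ← IsScalarTower.algebraMap_apply, ← Algebra.smul_def]
  -- the subalgebra of elements whose derivative clears with f^N
  let S : Subalgebra k A :=
    { carrier := {a | ∃ c, ι f ^ N * δ (ι a) = ι c}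
      one_mem' := ⟨0, by simp⟩
      zero_mem' := ⟨0, by simp⟩
      mul_mem' := by
        rintro a b ⟨ca, hca⟩ ⟨cb, hcb⟩
        refine ⟨a * cb + b * ca, ?_⟩
        rw [map_mul, Derivation.leibniz, smul_eq_mul, smul_eq_mul, mul_add, map_add,
          map_mul, map_mul]
        rw [← hca, ← hcb]
        ring
      add_mem' := by
        rintro a b ⟨ca, hca⟩ ⟨cb, hcb⟩
        exact ⟨ca + cb, by rw [map_add, Derivation.map_add, mul_add, hca, hcb, map_add]⟩
      algebraMap_mem' := by
        intro r
        refine ⟨0, ?_⟩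
        rw [hιdef, ← IsScalarTower.algebraMap_apply, Derivation.map_algebraMap]
        simp }
  have hSmem : ∀ a : A, ∃ c, ι f ^ N * δ (ι a) = ι c := by
    have htop : S = ⊤ := by
      rw [← top_le_iff, ← hs]
      apply Algebra.adjoin_le
      intro x hx
      obtain ⟨c, hc⟩ := hj x
      refine ⟨f ^ (N - j x) * c, ?_⟩
      have hle : j x ≤ N := Finset.le_sup hx
      rw [map_mul, ← hc, map_pow, ← mul_assoc, ← pow_add, Nat.sub_add_cancel hle]
    intro a
    have : a ∈ S := htop ▸ Algebra.mem_top
    exact this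
  let g : A → A := fun a => (hSmem a).choose
  have hg : ∀ a, ι (g a) = ι f ^ N * δ (ι a) := fun a => ((hSmem a).choose_spec).symm
  let D : Derivation k A A :=
    { toFun := g
      map_add' := by
        intro a b
        apply hι
        show ι (g (a + b)) = ι (g a + g b)
        rw [map_add, hg, hg, hg, map_add, Derivation.map_add, mul_add]
      map_smul' := by
        intro r a
        apply hι
        show ι (g (r • a)) = ι (r • g a)
        rw [hg, hsmul, hsmul, hg, Derivation.map_smul, mul_smul_comm]
      map_one_eq_zero' := by
        apply hι
        show ι (g 1) = ι 0
        rw [hg]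
        simp
      leibniz' := by
        intro a b
        apply hι
        show ι (g (a * b)) = ι (a • g b + b • g a)
        rw [hg, map_mul, Derivation.leibniz, smul_eq_mul, smul_eq_mul, map_add,
          smul_eq_mul, smul_eq_mul, map_mul, map_mul, hg, hg]
        ring }
  have hDg : ∀ a, D a = g a := fun a => rfl
  refine ⟨N, D, fun a => by rw [hDg, hg], ?_⟩
  have key : ∀ (n : ℕ) (a : A), ι ((⇑D)^[n] a) = ι f ^ (N * n) * (⇑δ)^[n] (ι a) := by
    intro n
    induction n with
    | zero => intro a; simp
    | succ n ih =>
      intro a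
      rw [Function.iterate_succ_apply', hDg, hg, ih, hpow, Function.iterate_succ_apply',
        ← mul_assoc, ← pow_add]
      ring_nf
  intro a
  obtain ⟨n, hn⟩ := hln (ι a)
  refine ⟨n, hι ?_⟩
  rw [key, hn, mul_zero, map_zero]
end

section
/- Let n ≥ 2, let α₁, …, α_n be positive integers and δ₁, …, δ_n be nonnegative integers such that δ₁ + ⋯ + δ_n = 2 and δ₁ ≥ 1, and suppose the following linear relations hold: −2α₁ + α₂ = −δ₁; α_{i−1} − 2α_i + α_{i+1} = −δ_i for all 1 < i < n; and α_{n−1} − 2α_n = −δ_n. Then α_i = 1 for all i, δ₁ = δ_n = 1, and δ_i = 0 for all 1 < i < n. -/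
/-- Let `n ≥ 2`, let `α 1, …, α n` be positive integers and `δ 1, …, δ n` nonnegative
integers with `δ 1 + ⋯ + δ n = 2` and `δ 1 ≥ 1`, satisfying the tridiagonal system
`-2 α 1 + α 2 = -δ 1`, `α (i-1) - 2 α i + α (i+1) = -δ i` for `1 < i < n`, and
`α (n-1) - 2 α n = -δ n`.  Then all `α i = 1`, `δ 1 = δ n = 1`, and `δ i = 0` for
`1 < i < n`. -/
theorem fundamental_cycle_coefficients (n : ℕ) (hn : 2 ≤ n) (α δ : ℕ → ℤ)
    (hα : ∀ i : ℕ, 1 ≤ i → i ≤ n → 0 < α i)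
    (hδ : ∀ i : ℕ, 1 ≤ i → i ≤ n → 0 ≤ δ i)
    (hsum : ∑ i ∈ Finset.Icc 1 n, δ i = 2)
    (hδ1 : 1 ≤ δ 1)
    (hfirst : -2 * α 1 + α 2 = -δ 1)
    (hmid : ∀ i : ℕ, 1 < i → i < n → α (i - 1) - 2 * α i + α (i + 1) = -δ i)
    (hlast : α (n - 1) - 2 * α n = -δ n) :
    (∀ i : ℕ, 1 ≤ i → i ≤ n → α i = 1) ∧ δ 1 = 1 ∧ δ n = 1 ∧
      (∀ i : ℕ, 1 < i → i < n → δ i = 0) := by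
  -- extend α by zero at 0 and n+1
  set β : ℕ → ℤ := fun i => if 1 ≤ i ∧ i ≤ n then α i else 0 with hβdef
  have hβ0 : β 0 = 0 := by simp [hβdef]
  have hβtop : β (n + 1) = 0 := by simp [hβdef]
  have hβeq : ∀ i, 1 ≤ i → i ≤ n → β i = α i := by
    intro i h1 h2; simp [hβdef, h1, h2]
  -- the recurrence for β
  have hrec : ∀ i, 1 ≤ i → i ≤ n → β (i + 1) - β i = (β i - β (i - 1)) - δ i := by
    intro i h1 h2
    rcases eq_or_lt_of_le h1 with h1' | h1'
    · -- i = 1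
      subst h1'
      rw [hβeq 1 le_rfl (by omega), hβeq 2 (by omega) (by omega)]
      simp only [hβ0]
      omega
    · rcases eq_or_lt_of_le h2 with h2' | h2'
      · -- i = n
        subst h2'
        rw [hβeq i h1 le_rfl, hβeq (i - 1) (by omega) (by omega), hβtop]
        omega
      · have := hmid i h1' h2'
        rw [hβeq i h1 h2, hβeq (i - 1) (by omega) (by omega),
          hβeq (i + 1) (by omega) (by omega)]
        omega
  -- partial sums of δ
  set S : ℕ → ℤ := fun i => ∑ j ∈ Finset.Ioc 0 i, δ j with hSdef
  have hS0 : S 0 = 0 := by simp [hSdef]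
  have hSsucc : ∀ i, S (i + 1) = S i + δ (i + 1) := by
    intro i
    simp only [hSdef]
    rw [Finset.sum_Ioc_succ_top (Nat.zero_le i)]
  have hSn : S n = 2 := by
    simp only [hSdef]
    rw [← Finset.Icc_add_one_left_eq_Ioc]
    exact hsum
  have hSmono : ∀ i j, i ≤ j → j ≤ n → S i ≤ S j := by
    intro i j hij hjn
    simp only [hSdef]
    rw [← Finset.sum_Ioc_consecutive δ (Nat.zero_le i) hij]
    have : 0 ≤ ∑ k ∈ Finset.Ioc i j, δ k := by
      apply Finset.sum_nonneg
      intro k hk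
      simp only [Finset.mem_Ioc] at hk
      exact hδ k (by omega) (by omega)
    omega
  have hSlb : ∀ i, 1 ≤ i → i ≤ n → 1 ≤ S i := by
    intro i h1 h2
    have h := hSmono 1 i h1 h2
    have : S 1 = δ 1 := by rw [hSsucc 0, hS0]; ring
    omega
  have hSub : ∀ i, i ≤ n → S i ≤ 2 := by
    intro i h
    have := hSmono i n h le_rfl
    omega
  -- first differences equal α 1 - S i
  have hg : ∀ i, i ≤ n → β (i + 1) - β i = α 1 - S i := by
    intro i hi
    induction i with
    | zero => rw [hβ0, hS0, hβeq 1 le_rfl (by omega)]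
    | succ k ih =>
      have h1 := hrec (k + 1) (by omega) hi
      have h2 := ih (by omega)
      have h3 : (k + 1) - 1 = k := rfl
      rw [h3] at h1
      rw [hSsucc k]
      omega
  -- telescoping
  have htel : ∑ i ∈ Finset.range (n + 1), (β (i + 1) - β i) = 0 := by
    rw [Finset.sum_range_sub β (n + 1), hβtop, hβ0]; ring
  have htel2 : ∑ i ∈ Finset.range (n + 1), (α 1 - S i) = 0 := by
    rw [← htel]
    apply Finset.sum_congr rfl
    intro i hi
    simp only [Finset.mem_range] at hi
    exact (hg i (by omega)).symm
  have hsplit : ∑ i ∈ Finset.range (n + 1), (α 1 - S i)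
      = (n + 1 : ℤ) * α 1 - ∑ i ∈ Finset.range (n + 1), S i := by
    rw [Finset.sum_sub_distrib, Finset.sum_const, Finset.card_range]
    ring
  have hTsum : (n + 1 : ℤ) * α 1 = ∑ i ∈ Finset.range (n + 1), S i := by
    rw [hsplit] at htel2; omega
  have hTsplit : ∑ i ∈ Finset.range (n + 1), S i
      = (∑ i ∈ Finset.range n, S (i + 1)) + S 0 := Finset.sum_range_succ' S n
  -- bound the sum of partial sums
  have hTub : ∑ i ∈ Finset.range n, S (i + 1) ≤ 2 * n := by
    calc ∑ i ∈ Finset.range n, S (i + 1) ≤ ∑ _i ∈ Finset.range n, (2 : ℤ) := by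
          apply Finset.sum_le_sum
          intro i hi
          simp only [Finset.mem_range] at hi
          exact hSub (i + 1) (by omega)
      _ = 2 * n := by rw [Finset.sum_const, Finset.card_range]; ring
  have hα1 : α 1 = 1 := by
    have h1 : 0 < α 1 := hα 1 le_rfl (by omega)
    have h2 : (n + 1 : ℤ) * α 1 ≤ 2 * n := by
      rw [hTsum, hTsplit, hS0]; omega
    nlinarith
  have hTval : ∑ i ∈ Finset.range n, S (i + 1) = n + 1 := by
    have := hTsum
    rw [hTsplit, hS0, hα1] at this
    omega
  -- each S (i+1) - 1 is nonneg, sums to 1, and the last one is 1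
  have hlastterm : S n - 1 = 1 := by omega
  have hfsum : ∑ i ∈ Finset.range n, (S (i + 1) - 1) = 1 := by
    rw [Finset.sum_sub_distrib, hTval, Finset.sum_const, Finset.card_range]
    ring
  obtain ⟨m, hm⟩ : ∃ m, n = m + 1 := ⟨n - 1, by omega⟩
  have hfsum' : ∑ i ∈ Finset.range m, (S (i + 1) - 1) = 0 := by
    have := hfsum
    rw [hm, Finset.sum_range_succ] at this
    have hmn : m + 1 = n := hm.symm
    rw [hmn, hlastterm] at this
    omega
  have hSone : ∀ i, 1 ≤ i → i < n → S i = 1 := by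
    intro i h1 h2
    have hnn : ∀ j ∈ Finset.range m, (0 : ℤ) ≤ S (j + 1) - 1 := by
      intro j hj
      simp only [Finset.mem_range] at hj
      have := hSlb (j + 1) (by omega) (by omega)
      omega
    have := (Finset.sum_eq_zero_iff_of_nonneg hnn).mp hfsum' (i - 1)
      (by simp only [Finset.mem_range]; omega)
    have hi1 : i - 1 + 1 = i := by omega
    rw [hi1] at this
    omega
  -- conclude about δ
  have hδ1' : δ 1 = 1 := by
    have : S 1 = δ 1 := by rw [hSsucc 0, hS0]; ring
    have hS1 : S 1 = 1 := hSone 1 le_rfl (by omega)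
    omega
  have hδn : δ n = 1 := by
    have h1 : S (n - 1) = 1 := hSone (n - 1) (by omega) (by omega)
    have h2 : S ((n - 1) + 1) = S (n - 1) + δ ((n - 1) + 1) := hSsucc (n - 1)
    have h3 : (n - 1) + 1 = n := by omega
    rw [h3] at h2
    omega
  have hδmid : ∀ i, 1 < i → i < n → δ i = 0 := by
    intro i h1 h2
    have ha : S (i - 1) = 1 := hSone (i - 1) (by omega) (by omega)
    have hb : S i = 1 := hSone i (by omega) h2
    have hc : S ((i - 1) + 1) = S (i - 1) + δ ((i - 1) + 1) := hSsucc (i - 1)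
    have hd : (i - 1) + 1 = i := by omega
    rw [hd] at hc
    omega
  -- conclude about α
  have hαall : ∀ i, 1 ≤ i → i ≤ n → α i = 1 := by
    intro i h1 h2
    induction i with
    | zero => omega
    | succ k ih =>
      rcases Nat.eq_zero_or_pos k with hk | hk
      · subst hk; exact hα1
      · have hkn : k < n := by omega
        have hgk := hg k (by omega)
        have hSk : S k = 1 := hSone k hk hkn
        rw [hα1, hSk, hβeq (k + 1) (by omega) h2, hβeq k hk (by omega)] at hgk
        have := ih hk (by omega)
        omega
  exact ⟨hαall, hδ1', hδn, hδmid⟩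
end

section
/- Let q = x₁x₃ + x₂x₄ ∈ ℂ[x₁, x₂, x₃, x₄], and let q' = x₁·u + x₂·v where u, v ∈ ℂ[x₁, x₂, x₃, x₄] are linear forms and u has zero coefficient at x₃. Suppose that for every point (0, 0, s, t) ∈ ℂ⁴ the 2 × 4 matrix whose rows are the gradients of q and q' evaluated at (0, 0, s, t) has rank at most 1. Then the coefficient of x₄ in u and the coefficients of x₃ and x₄ in v all vanish; consequently q' is a ℂ-linear combination of x₁², x₁x₂ and x₂², i.e. q' lies in the square of the ideal (x₁, x₂). -/
open MvPolynomial

private lemma degree_one_single {σ : Type*} (d : σ →₀ ℕ) (h : d.degree = 1) :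
    ∃ i, d = Finsupp.single i 1 := by
  classical
  unfold Finsupp.degree at h
  change ∑ i ∈ d.support, d i = 1 at h
  have hne : d.support.Nonempty := by
    by_contra hc
    rw [Finset.not_nonempty_iff_eq_empty] at hc
    simp [hc] at h
  obtain ⟨i, hi⟩ := hne
  have hdi : d i = 1 := by
    have h1 : 1 ≤ d i := Nat.one_le_iff_ne_zero.2 (Finsupp.mem_support_iff.1 hi)
    have h2 : d i ≤ 1 := h ▸ Finset.single_le_sum (fun _ _ => Nat.zero_le _) hi
    omega
  refine ⟨i, Finsupp.ext fun j => ?_⟩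
  by_cases hj : j = i
  · subst hj; simp [hdi]
  · rw [Finsupp.single_eq_of_ne' (Ne.symm hj)]
    by_contra hc
    have hjs : j ∈ d.support := Finsupp.mem_support_iff.2 hc
    have hsub : ({i, j} : Finset σ) ⊆ d.support := by
      intro k hk
      rcases Finset.mem_insert.1 hk with rfl | hk
      · exact hi
      · exact Finset.mem_singleton.1 hk ▸ hjs
    have := Finset.sum_le_sum_of_subset (f := fun k => d k) hsub
    rw [Finset.sum_pair (Ne.symm hj), h] at this
    omega

private lemma hom1_eq (p : MvPolynomial (Fin 4) ℂ) (hp : p.IsHomogeneous 1) :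
    p = ∑ i : Fin 4, C (coeff (Finsupp.single i 1) p) * X i := by
  ext d
  rw [coeff_sum]
  simp only [coeff_C_mul, coeff_X', mul_ite, mul_one, mul_zero]
  by_cases hd : ∃ i, d = Finsupp.single i 1
  · obtain ⟨i, rfl⟩ := hd
    rw [Finset.sum_eq_single i]
    · simp
    · intro j _ hj
      rw [if_neg]
      intro hcon
      exact hj (by simpa [Finsupp.single_left_inj (one_ne_zero (α := ℕ))] using hcon)
    · simp
  · have h0 : coeff d p = 0 :=
      hp.coeff_eq_zero (fun hdeg => hd (degree_one_single d hdeg))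
    rw [h0, Finset.sum_eq_zero]
    intro j _
    rw [if_neg]
    exact fun hcon => hd ⟨j, hcon.symm⟩

private lemma rank_le_one_det (M : Matrix (Fin 2) (Fin 4) ℂ) (h : M.rank ≤ 1) :
    M 0 0 * M 1 1 - M 0 1 * M 1 0 = 0 := by
  by_contra hd
  have hli : LinearIndependent ℂ M := by
    change LinearIndependent ℂ (fun i => M i)
    rw [linearIndependent_fin2]
    constructor
    · intro h1
      apply hd
      rw [show M 1 = 0 from h1]
      simp
    · intro a ha
      apply hd
      have h0 := congrFun ha 0
      have h1 := congrFun ha 1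
      simp only [Pi.smul_apply, smul_eq_mul] at h0 h1
      rw [← h0, ← h1]
      ring
  have := hli.rank_matrix
  simp only [Fintype.card_fin] at this
  omega

/-- Let `q = x₁x₃ + x₂x₄` and `q' = x₁·u + x₂·v`, where `u, v` are linear forms and `u`
does not involve `x₃`.  If at every point `(0,0,s,t)` the `2 × 4` matrix whose rows are the
gradients of `q` and `q'` has rank at most `1`, then the coefficient of `x₄` in `u` and the
coefficients of `x₃`, `x₄` in `v` vanish; consequently `q'` lies in the square of the ideal
`(x₁, x₂)`, i.e. `q'` is a cone with vertex the line `{x₁ = x₂ = 0}`. -/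
theorem second_quadric_is_cone (u v q q' : MvPolynomial (Fin 4) ℂ)
    (hu : u.IsHomogeneous 1) (hv : v.IsHomogeneous 1)
    (hu3 : coeff (Finsupp.single 2 1) u = 0)
    (hq : q = X 0 * X 2 + X 1 * X 3)
    (hq' : q' = X 0 * u + X 1 * v)
    (hrank : ∀ s t : ℂ,
      Matrix.rank (Matrix.of
        ![fun j : Fin 4 => eval ![0, 0, s, t] (pderiv j q),
          fun j : Fin 4 => eval ![0, 0, s, t] (pderiv j q')]) ≤ 1) :
    coeff (Finsupp.single 3 1) u = 0 ∧
    coeff (Finsupp.single 2 1) v = 0 ∧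
    coeff (Finsupp.single 3 1) v = 0 ∧
    q' ∈ (Ideal.span {X 0, X 1} : Ideal (MvPolynomial (Fin 4) ℂ)) ^ 2 := by
  have hevu : ∀ s t : ℂ, eval ![0, 0, s, t] u =
      coeff (Finsupp.single 2 1) u * s + coeff (Finsupp.single 3 1) u * t := by
    intro s t
    conv_lhs => rw [hom1_eq u hu]
    simp [Fin.sum_univ_four]
  have hevv : ∀ s t : ℂ, eval ![0, 0, s, t] v =
      coeff (Finsupp.single 2 1) v * s + coeff (Finsupp.single 3 1) v * t := by
    intro s t
    conv_lhs => rw [hom1_eq v hv]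
    simp [Fin.sum_univ_four]
  have key : ∀ s t : ℂ,
      s * eval ![0, 0, s, t] v - t * eval ![0, 0, s, t] u = 0 := by
    intro s t
    have h := rank_le_one_det _ (hrank s t)
    rw [hq, hq'] at h
    simp [pderiv_mul] at h
    exact h
  simp only [hevu, hevv] at key
  have hb2 : coeff (Finsupp.single 2 1) v = 0 := by
    have := key 1 0; simpa using this
  have ha3 : coeff (Finsupp.single 3 1) u = 0 := by
    have := key 0 1; simp [hu3] at this; simpa using this
  have hb3 : coeff (Finsupp.single 3 1) v = 0 := by
    have := key 1 1; simp [hu3, ha3, hb2] at this; simpa using this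
  have hX0 : (X 0 : MvPolynomial (Fin 4) ℂ) ∈ Ideal.span {X 0, X 1} :=
    Ideal.subset_span (by simp)
  have hX1 : (X 1 : MvPolynomial (Fin 4) ℂ) ∈ Ideal.span {X 0, X 1} :=
    Ideal.subset_span (by simp)
  have hmemu : u ∈ Ideal.span {X 0, X 1} := by
    rw [hom1_eq u hu, Fin.sum_univ_four, hu3, ha3]
    simp only [map_zero, zero_mul, add_zero]
    exact Ideal.add_mem _ (Ideal.mul_mem_left _ _ hX0) (Ideal.mul_mem_left _ _ hX1)
  have hmemv : v ∈ Ideal.span {X 0, X 1} := by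
    rw [hom1_eq v hv, Fin.sum_univ_four, hb2, hb3]
    simp only [map_zero, zero_mul, add_zero]
    exact Ideal.add_mem _ (Ideal.mul_mem_left _ _ hX0) (Ideal.mul_mem_left _ _ hX1)
  refine ⟨ha3, hb2, hb3, ?_⟩
  rw [hq', pow_two]
  exact Ideal.add_mem _ (Ideal.mul_mem_mul hX0 hmemu) (Ideal.mul_mem_mul hX1 hmemv)
end
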